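/- Let $(\Omega, P)$ be a probability space, $\mathcal{X}, \mathcal{Y}$ standard Borel spaces, $\mathcal{Z}$ a measurable space, and let $X : \Omega \to \mathcal{X}$, $Y : \Omega \to \mathcal{Y}$, $Z : \Omega \to \mathcal{Z}$ be measurable. Then $Y$ and $X$ are conditionally independent given the $\sigma$-algebra generated by $Z$ if and only if the conditional distribution of $X$ given the pair $(Z, Y)$ is, for $(Z,Y)_*P$-almost every $(z,y)$, equal to the conditional distribution of $X$ given $Z$ evaluated at $z$ (i.e. $\mathrm{condDistrib}(X, (Z,Y), P)$ agrees $(Z,Y)_*P$-a.e. with the kernel obtained from $\mathrm{condDistrib}(X, Z, P)$ by ignoring the second argument). -/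

import Mathlib

open MeasureTheory ProbabilityTheory
open scoped ENNReal

open MeasurableSpace Set Filter

section Aux

variable {Ω 𝓧 𝓨 𝓩 : Type*} [MeasurableSpace Ω]
    [MeasurableSpace 𝓧] [StandardBorelSpace 𝓧] [Nonempty 𝓧]
    [MeasurableSpace 𝓨] [MeasurableSpace 𝓩]
    (P : Measure Ω) [IsProbabilityMeasure P]
    {X : Ω → 𝓧} {Y : Ω → 𝓨} {Z : Ω → 𝓩}

lemma aux_key (hX : Measurable X) (hY : Measurable Y) (hZ : Measurable Z)
    {A : Set 𝓧} {B : Set 𝓨} {C : Set 𝓩}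
    (hA : MeasurableSet A) (hB : MeasurableSet B) (hC : MeasurableSet C) :
    ∫⁻ ω in Z ⁻¹' C ∩ Y ⁻¹' B, condDistrib X Z P (Z ω) A ∂P
      = ENNReal.ofReal (∫ ω in Z ⁻¹' C,
          (condDistrib X Z P (Z ω) A).toReal
            * (P⟦Y ⁻¹' B | MeasurableSpace.comap Z inferInstance⟧) ω ∂P) := by
  have hZle : MeasurableSpace.comap Z inferInstance ≤ _ := hZ.comap_le
  have hg_meas : Measurable[(MeasurableSpace.comap Z inferInstance)] fun ω => condDistrib X Z P (Z ω) A :=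
    measurable_condDistrib hA
  have hg_sm : StronglyMeasurable[(MeasurableSpace.comap Z inferInstance)] fun ω => (condDistrib X Z P (Z ω) A).toReal :=
    (@Measurable.ennreal_toReal _ (MeasurableSpace.comap Z inferInstance) _ hg_meas).stronglyMeasurable
  have hB_int : Integrable ((Y ⁻¹' B).indicator fun _ => (1 : ℝ)) P :=
    (integrable_const 1).indicator (hY hB)
  have h_mul_int : Integrable
      ((fun ω => (condDistrib X Z P (Z ω) A).toReal)
        * (Y ⁻¹' B).indicator fun _ => (1 : ℝ)) P := by
    refine Integrable.bdd_mul hB_int (hg_sm.mono hZle).aestronglyMeasurable (c := 1) (Eventually.of_forall fun ω => ?_)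
    rw [Real.norm_eq_abs, abs_of_nonneg ENNReal.toReal_nonneg]
    exact ENNReal.toReal_le_of_le_ofReal zero_le_one (by simpa using prob_le_one)
  have h_pull := condExp_mul_of_stronglyMeasurable_left (μ := P) (m := (MeasurableSpace.comap Z inferInstance)) hg_sm h_mul_int hB_int
  have hCz : MeasurableSet[(MeasurableSpace.comap Z inferInstance)] (Z ⁻¹' C) := ⟨C, hC, rfl⟩
  have step1 : ∫ ω in Z ⁻¹' C,
      (condDistrib X Z P (Z ω) A).toReal * (P⟦Y ⁻¹' B | (MeasurableSpace.comap Z inferInstance)⟧) ω ∂P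
      = ∫ ω in Z ⁻¹' C ∩ Y ⁻¹' B, (condDistrib X Z P (Z ω) A).toReal ∂P := by
    have e1 : ∫ ω in Z ⁻¹' C,
        (condDistrib X Z P (Z ω) A).toReal * (P⟦Y ⁻¹' B | (MeasurableSpace.comap Z inferInstance)⟧) ω ∂P
        = ∫ ω in Z ⁻¹' C, (P[(fun ω => (condDistrib X Z P (Z ω) A).toReal)
            * (Y ⁻¹' B).indicator fun _ => (1 : ℝ) | (MeasurableSpace.comap Z inferInstance)]) ω ∂P := by
      refine setIntegral_congr_ae (hZ hC) ?_
      filter_upwards [h_pull] with ω hω _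
      exact hω.symm
    rw [e1, setIntegral_condExp hZle h_mul_int hCz]
    have e2 : ∀ ω, ((fun ω => (condDistrib X Z P (Z ω) A).toReal)
        * (Y ⁻¹' B).indicator fun _ => (1 : ℝ)) ω
        = (Y ⁻¹' B).indicator (fun ω => (condDistrib X Z P (Z ω) A).toReal) ω := by
      intro ω
      by_cases h : ω ∈ Y ⁻¹' B <;>
        simp [Set.indicator_of_mem, Set.indicator_of_notMem, h]
    rw [show ((fun ω => (condDistrib X Z P (Z ω) A).toReal)
        * (Y ⁻¹' B).indicator fun _ => (1 : ℝ))
        = (Y ⁻¹' B).indicator (fun ω => (condDistrib X Z P (Z ω) A).toReal) from funext e2]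
    rw [setIntegral_indicator (hY hB)]
  rw [step1]
  have hmeas : AEMeasurable (fun ω => condDistrib X Z P (Z ω) A)
      (P.restrict (Z ⁻¹' C ∩ Y ⁻¹' B)) :=
    ((Kernel.measurable_coe _ hA).comp hZ).aemeasurable
  rw [integral_toReal hmeas (Eventually.of_forall fun ω => measure_lt_top _ _)]
  rw [ENNReal.ofReal_toReal]
  refine ne_of_lt (lt_of_le_of_lt (setLIntegral_le_lintegral _ _) ?_)
  calc ∫⁻ ω, condDistrib X Z P (Z ω) A ∂P ≤ ∫⁻ _, 1 ∂P :=
        lintegral_mono fun ω => prob_le_one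
    _ < ∞ := by simp

end Aux

section Aux2

variable {Ω 𝓧 𝓨 𝓩 : Type*} [MeasurableSpace Ω]
    [MeasurableSpace 𝓧] [StandardBorelSpace 𝓧] [Nonempty 𝓧]
    [MeasurableSpace 𝓨] [MeasurableSpace 𝓩]
    (P : Measure Ω) [IsProbabilityMeasure P]
    {X : Ω → 𝓧} {Y : Ω → 𝓨} {Z : Ω → 𝓩}

lemma aux_map_trip (hX : Measurable X) (hY : Measurable Y) (hZ : Measurable Z)
    {A : Set 𝓧} {B : Set 𝓨} {C : Set 𝓩}
    (hA : MeasurableSet A) (hB : MeasurableSet B) (hC : MeasurableSet C) :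
    P.map (fun ω => ((Z ω, Y ω), X ω)) ((C ×ˢ B) ×ˢ A)
      = P (Z ⁻¹' C ∩ Y ⁻¹' B ∩ X ⁻¹' A) := by
  rw [Measure.map_apply ((hZ.prodMk hY).prodMk hX) ((hC.prod hB).prod hA)]
  rfl

lemma aux_compProd_rect (hX : Measurable X) (hY : Measurable Y) (hZ : Measurable Z)
    {A : Set 𝓧} {B : Set 𝓨} {C : Set 𝓩}
    (hA : MeasurableSet A) (hB : MeasurableSet B) (hC : MeasurableSet C) :
    (P.map (fun ω => (Z ω, Y ω)) ⊗ₘ Kernel.prodMkRight 𝓨 (condDistrib X Z P)) ((C ×ˢ B) ×ˢ A)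
      = ∫⁻ ω in Z ⁻¹' C ∩ Y ⁻¹' B, condDistrib X Z P (Z ω) A ∂P := by
  haveI : IsProbabilityMeasure (P.map (fun ω => (Z ω, Y ω))) :=
    Measure.isProbabilityMeasure_map (hZ.prodMk hY).aemeasurable
  rw [Measure.compProd_apply_prod (hC.prod hB) hA]
  have h1 : ∀ p : 𝓩 × 𝓨, Kernel.prodMkRight 𝓨 (condDistrib X Z P) p A
      = condDistrib X Z P p.1 A := fun p => rfl
  simp_rw [h1]
  rw [setLIntegral_map (f := fun p : 𝓩 × 𝓨 => condDistrib X Z P p.1 A) (hC.prod hB)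
    (by exact (Kernel.measurable_coe _ hA).comp measurable_fst) (hZ.prodMk hY)]
  rw [Set.mk_preimage_prod]

lemma aux_nonneg (hZ : Measurable Z) {A : Set 𝓧} {B : Set 𝓨} {C : Set 𝓩}
    (hC : MeasurableSet C) :
    0 ≤ ∫ ω in Z ⁻¹' C, (condDistrib X Z P (Z ω) A).toReal
        * (P⟦Y ⁻¹' B | MeasurableSpace.comap Z inferInstance⟧) ω ∂P := by
  refine setIntegral_nonneg_ae (hZ hC) ?_
  filter_upwards [condExp_nonneg (m := MeasurableSpace.comap Z inferInstance)
    (f := (Y ⁻¹' B).indicator fun _ => (1 : ℝ)) (μ := P)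
    (Eventually.of_forall fun ω => Set.indicator_nonneg
      (fun _ _ => zero_le_one) ω)] with ω h _
  exact mul_nonneg ENNReal.toReal_nonneg h

end Aux2

/-- Two random variables `Y` and `X` on a probability space `(Ω, P)` are conditionally
independent given the σ-algebra generated by `Z` if and only if the conditional distribution of
`X` given the pair `(Z, Y)` agrees, `(Z, Y)_* P`-almost everywhere, with the conditional
distribution of `X` given `Z` (seen as a kernel on `𝓩 × 𝓨` ignoring the second argument). -/
theorem condIndepFun_iff_condDistrib_prod_ae_eq_prodMkRight
    {Ω 𝓧 𝓨 𝓩 : Type*} [MeasurableSpace Ω] [StandardBorelSpace Ω] [Nonempty Ω]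
    [MeasurableSpace 𝓧] [StandardBorelSpace 𝓧] [Nonempty 𝓧]
    [MeasurableSpace 𝓨] [StandardBorelSpace 𝓨] [Nonempty 𝓨]
    [MeasurableSpace 𝓩]
    (P : Measure Ω) [IsProbabilityMeasure P]
    {X : Ω → 𝓧} {Y : Ω → 𝓨} {Z : Ω → 𝓩}
    (hX : Measurable X) (hY : Measurable Y) (hZ : Measurable Z) :
    CondIndepFun (MeasurableSpace.comap Z inferInstance) hZ.comap_le Y X P ↔
      condDistrib X (fun ω ↦ (Z ω, Y ω)) P
        =ᵐ[P.map (fun ω ↦ (Z ω, Y ω))] Kernel.prodMkRight 𝓨 (condDistrib X Z P) := by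
  have hZle : MeasurableSpace.comap Z inferInstance ≤ _ := hZ.comap_le
  haveI : IsProbabilityMeasure (P.map (fun ω => (Z ω, Y ω))) :=
    Measure.isProbabilityMeasure_map (hZ.prodMk hY).aemeasurable
  constructor
  · intro h
    rw [condIndepFun_iff_condExp_inter_preimage_eq_mul hY hX] at h
    have h_eq : P.map (fun ω => ((Z ω, Y ω), X ω))
        = P.map (fun ω => (Z ω, Y ω)) ⊗ₘ Kernel.prodMkRight 𝓨 (condDistrib X Z P) := by
      haveI : IsProbabilityMeasure (P.map (fun ω => ((Z ω, Y ω), X ω))) :=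
        Measure.isProbabilityMeasure_map ((hZ.prodMk hY).prodMk hX).aemeasurable
      refine ext_of_generate_finite
        (Set.image2 (· ×ˢ ·) (Set.image2 (· ×ˢ ·) {s : Set 𝓩 | MeasurableSet s}
          {t : Set 𝓨 | MeasurableSet t}) {u : Set 𝓧 | MeasurableSet u}) ?_ ?_ ?_ ?_
      · exact (generateFrom_eq_prod generateFrom_prod generateFrom_measurableSet
          (isCountablySpanning_measurableSet.prod isCountablySpanning_measurableSet)
          isCountablySpanning_measurableSet).symm
      · exact (isPiSystem_measurableSet.prod isPiSystem_measurableSet).prod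
          isPiSystem_measurableSet
      · rintro _ ⟨_, ⟨C, hC, B, hB, rfl⟩, A, hA, rfl⟩
        rw [aux_map_trip P hX hY hZ hA hB hC, aux_compProd_rect P hX hY hZ hA hB hC,
          aux_key P hX hY hZ hA hB hC]
        have e1 : ∫ ω in Z ⁻¹' C, (condDistrib X Z P (Z ω) A).toReal
            * (P⟦Y ⁻¹' B | MeasurableSpace.comap Z inferInstance⟧) ω ∂P
            = ∫ ω in Z ⁻¹' C,
                (P⟦Y ⁻¹' B ∩ X ⁻¹' A | MeasurableSpace.comap Z inferInstance⟧) ω ∂P := by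
          refine setIntegral_congr_ae (hZ hC) ?_
          filter_upwards [condDistrib_ae_eq_condExp hZ hX hA, h B A hB hA] with ω h1 h2 _
          rw [h2, ← measureReal_def, h1]; ring
        have e2 : ∫ ω in Z ⁻¹' C,
            (P⟦Y ⁻¹' B ∩ X ⁻¹' A | MeasurableSpace.comap Z inferInstance⟧) ω ∂P
            = (P (Z ⁻¹' C ∩ Y ⁻¹' B ∩ X ⁻¹' A)).toReal := by
          rw [setIntegral_condExp hZle
              ((integrable_const (1 : ℝ)).indicator ((hY hB).inter (hX hA))) ⟨C, hC, rfl⟩,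
            integral_indicator_const _ ((hY hB).inter (hX hA)),
            measureReal_restrict_apply ((hY hB).inter (hX hA)), smul_eq_mul, mul_one, inter_comm,
            inter_assoc, measureReal_def]
        rw [e1, e2, ENNReal.ofReal_toReal (measure_ne_top _ _)]
      · simp
    have h2 := condDistrib_ae_eq_of_measure_eq_compProd (μ := P) (fun ω => (Z ω, Y ω)) hX.aemeasurable
      (κ := Kernel.prodMkRight 𝓨 (condDistrib X Z P)) h_eq
    filter_upwards [h2] with p hp using hp
  · intro hae
    have h_eq : P.map (fun ω => ((Z ω, Y ω), X ω))
        = P.map (fun ω => (Z ω, Y ω)) ⊗ₘ Kernel.prodMkRight 𝓨 (condDistrib X Z P) := by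
      have h1 : P.map (fun ω => ((Z ω, Y ω), X ω))
          = P.map (fun ω => (Z ω, Y ω)) ⊗ₘ condDistrib X (fun ω => (Z ω, Y ω)) P := by
        rw [condDistrib]
        have h2 := Measure.disintegrate (P.map (fun ω => ((Z ω, Y ω), X ω))) (P.map (fun ω => ((Z ω, Y ω), X ω))).condKernel
        rw [Measure.fst_map_prodMk hX] at h2
        exact h2.symm
      rw [h1, Measure.compProd_congr hae]
    rw [condIndepFun_iff_condExp_inter_preimage_eq_mul hY hX]
    intro B A hB hA
    have hval : ∀ {C : Set 𝓩}, MeasurableSet C →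
        ∫ ω in Z ⁻¹' C, (condDistrib X Z P (Z ω) A).toReal
            * (P⟦Y ⁻¹' B | MeasurableSpace.comap Z inferInstance⟧) ω ∂P
          = (P (Z ⁻¹' C ∩ (Y ⁻¹' B ∩ X ⁻¹' A))).toReal := by
      intro C hC
      have hc := congrArg (fun μ : Measure ((𝓩 × 𝓨) × 𝓧) => μ ((C ×ˢ B) ×ˢ A)) h_eq
      rw [aux_map_trip P hX hY hZ hA hB hC, aux_compProd_rect P hX hY hZ hA hB hC,
        aux_key P hX hY hZ hA hB hC] at hc
      rw [show Z ⁻¹' C ∩ (Y ⁻¹' B ∩ X ⁻¹' A) = Z ⁻¹' C ∩ Y ⁻¹' B ∩ X ⁻¹' A from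
        (Set.inter_assoc _ _ _).symm, hc, ENNReal.toReal_ofReal (aux_nonneg P hZ hC)]
    have hg_meas : Measurable[MeasurableSpace.comap Z inferInstance]
        fun ω => condDistrib X Z P (Z ω) A := measurable_condDistrib hA
    have hg_sm : StronglyMeasurable[MeasurableSpace.comap Z inferInstance]
        fun ω => (condDistrib X Z P (Z ω) A).toReal :=
      (@Measurable.ennreal_toReal _ (MeasurableSpace.comap Z inferInstance) _
        hg_meas).stronglyMeasurable
    have hbdd : ∀ ω, ‖(condDistrib X Z P (Z ω) A).toReal‖ ≤ 1 := by
      intro ω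
      rw [Real.norm_eq_abs, abs_of_nonneg ENNReal.toReal_nonneg]
      exact ENNReal.toReal_le_of_le_ofReal zero_le_one (by simpa using prob_le_one)
    have hmain : (fun ω => (condDistrib X Z P (Z ω) A).toReal
        * (P⟦Y ⁻¹' B | MeasurableSpace.comap Z inferInstance⟧) ω)
        =ᵐ[P] P⟦Y ⁻¹' B ∩ X ⁻¹' A | MeasurableSpace.comap Z inferInstance⟧ := by
      refine ae_eq_condExp_of_forall_setIntegral_eq hZle
        ((integrable_const (1 : ℝ)).indicator ((hY hB).inter (hX hA))) ?_ ?_ ?_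
      · intro s hs hμs
        refine Integrable.integrableOn ?_
        exact Integrable.bdd_mul integrable_condExp
          (hg_sm.mono hZle).aestronglyMeasurable (Eventually.of_forall hbdd)
      · rintro _ ⟨C, hC, rfl⟩ _
        rw [hval hC, integral_indicator_const _ ((hY hB).inter (hX hA)),
          measureReal_restrict_apply ((hY hB).inter (hX hA)), smul_eq_mul, mul_one, inter_comm,
          measureReal_def]
      · exact StronglyMeasurable.aestronglyMeasurable
          (hg_sm.mul stronglyMeasurable_condExp)
    refine (hmain.symm).trans ?_
    filter_upwards [condDistrib_ae_eq_condExp hZ hX hA] with ω h1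
    rw [← h1, measureReal_def]; ring
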